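/- Let A be positive semidefinite and x, y, e ∈ H with ‖e‖_A = 1. Then |⟨x,e⟩_A · ⟨e,y⟩_A| ≤ (1/2)(|⟨x,y⟩_A| + ‖x‖_A‖y‖_A). -/

import Mathlib

noncomputable section

namespace DW

variable {H : Type*} [NormedAddCommGroup H] [InnerProductSpace ℂ H]

/-- The semi-inner product induced by `A`: `⟨x,y⟩_A = ⟨Ax, y⟩`. -/
def innA (A : H →L[ℂ] H) (x y : H) : ℂ := inner ℂ (A x) y

/-- The seminorm induced by `A`. -/
def normA (A : H →L[ℂ] H) (x : H) : ℝ := Real.sqrt (innA A x x).re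

/-- `T` is `A`-bounded. -/
def IsABounded (A T : H →L[ℂ] H) : Prop := ∃ c > 0, ∀ x, normA A (T x) ≤ c * normA A x

/-- `S` is an `A`-adjoint of `T`. -/
def IsAAdjointPair (A T S : H →L[ℂ] H) : Prop := ∀ x y, innA A (T x) y = innA A x (S y)

/-- The `A`-operator seminorm. -/
def opNormA (A T : H →L[ℂ] H) : ℝ := sSup {r | ∃ x, normA A x = 1 ∧ r = normA A (T x)}

/-- The `A`-minimum modulus. -/
def mA (A T : H →L[ℂ] H) : ℝ := sInf {r | ∃ x, normA A x = 1 ∧ r = normA A (T x)}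

/-- The `A`-numerical radius. -/
def wA (A T : H →L[ℂ] H) : ℝ :=
  sSup {r | ∃ x, normA A x = 1 ∧ r = ‖innA A (T x) x‖}

/-- The `A`-Crawford number. -/
def cA (A T : H →L[ℂ] H) : ℝ :=
  sInf {r | ∃ x, normA A x = 1 ∧ r = ‖innA A (T x) x‖}

/-- The `A`-Davis-Wielandt radius. -/
def dwA (A T : H →L[ℂ] H) : ℝ :=
  sSup {r | ∃ x, normA A x = 1 ∧
    r = Real.sqrt (‖innA A (T x) x‖ ^ 2 + normA A (T x) ^ 4)}

/-- The semi-inner product on `H ⊕ H` induced by `𝔸 = diag(A,A)`. -/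
def innA2 (A : H →L[ℂ] H) (z w : H × H) : ℂ := innA A z.1 w.1 + innA A z.2 w.2

/-- The seminorm on `H ⊕ H` induced by `𝔸 = diag(A,A)`. -/
def normA2 (A : H →L[ℂ] H) (z : H × H) : ℝ := Real.sqrt (innA2 A z z).re

/-- The `𝔸`-numerical radius on `H ⊕ H`, `𝔸 = diag(A,A)`. -/
def wA2 (A : H →L[ℂ] H) (T : H × H →L[ℂ] H × H) : ℝ :=
  sSup {r | ∃ z, normA2 A z = 1 ∧ r = ‖innA2 A (T z) z‖}

/-- The `𝔸`-Davis-Wielandt radius on `H ⊕ H`, `𝔸 = diag(A,A)`. -/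
def dwA2 (A : H →L[ℂ] H) (T : H × H →L[ℂ] H × H) : ℝ :=
  sSup {r | ∃ z, normA2 A z = 1 ∧
    r = Real.sqrt (‖innA2 A (T z) z‖ ^ 2 + normA2 A (T z) ^ 4)}

/-- The block operator `[[0, X], [Y, 0]]` on `H ⊕ H`. -/
def offDiag (X Y : H →L[ℂ] H) : H × H →L[ℂ] H × H :=
  (X.comp (ContinuousLinearMap.snd ℂ H H)).prod (Y.comp (ContinuousLinearMap.fst ℂ H H))

end DW


section Buzano
open scoped InnerProductSpace ComplexConjugate

variable {H : Type*} [NormedAddCommGroup H] [InnerProductSpace ℂ H]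


open scoped InnerProductSpace ComplexConjugate


theorem buzano (u v w : H) (hw : ‖w‖ = 1) :
    ‖⟪u, w⟫_ℂ * ⟪w, v⟫_ℂ‖ ≤
      (1 / 2) * (‖⟪u, v⟫_ℂ‖ + ‖u‖ * ‖v‖) := by
  set c : ℂ := ⟪w, u⟫_ℂ with hc
  set R : H := (2 : ℂ) • c • w - u with hR
  have hwc : ⟪u, w⟫_ℂ = conj c := by rw [hc, inner_conj_symm]
  have hww : ⟪w, w⟫_ℂ = 1 := by
    rw [inner_self_eq_norm_sq_to_K, hw]; norm_num
  have hRR : ⟪R, R⟫_ℂ = ⟪u, u⟫_ℂ := by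
    simp only [hR, inner_sub_left, inner_sub_right, inner_smul_left, inner_smul_right,
      hww, inner_conj_symm, map_mul, map_ofNat, Complex.conj_conj, ← hc, hwc]
    ring
  have hnorm : ‖R‖ = ‖u‖ := by
    rw [norm_eq_sqrt_re_inner (𝕜 := ℂ), norm_eq_sqrt_re_inner (𝕜 := ℂ), hRR]
  have hRv : ⟪R, v⟫_ℂ = 2 * (⟪u, w⟫_ℂ * ⟪w, v⟫_ℂ) - ⟪u, v⟫_ℂ := by
    simp only [hR, inner_sub_left, inner_smul_left, map_ofNat, hwc]
  have hsum : (2 : ℂ) * (⟪u, w⟫_ℂ * ⟪w, v⟫_ℂ) = ⟪u, v⟫_ℂ + ⟪R, v⟫_ℂ := by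
    rw [hRv]; ring
  have key : 2 * ‖⟪u, w⟫_ℂ * ⟪w, v⟫_ℂ‖
      ≤ ‖⟪u, v⟫_ℂ‖ + ‖u‖ * ‖v‖ := by
    calc 2 * ‖⟪u, w⟫_ℂ * ⟪w, v⟫_ℂ‖
        = ‖(2 : ℂ) * (⟪u, w⟫_ℂ * ⟪w, v⟫_ℂ)‖ := by
          rw [norm_mul]; norm_num
      _ = ‖⟪u, v⟫_ℂ + ⟪R, v⟫_ℂ‖ := by rw [hsum]
      _ ≤ ‖⟪u, v⟫_ℂ‖ + ‖⟪R, v⟫_ℂ‖ := norm_add_le _ _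
      _ ≤ ‖⟪u, v⟫_ℂ‖ + ‖u‖ * ‖v‖ := by
          gcongr
          calc ‖⟪R, v⟫_ℂ‖ = ‖(⟪R, v⟫_ℂ)‖ := rfl
            _ ≤ ‖R‖ * ‖v‖ := norm_inner_le_norm _ _
            _ = ‖u‖ * ‖v‖ := by rw [hnorm]
  linarith

end Buzano

open DW

variable {H : Type*} [NormedAddCommGroup H] [InnerProductSpace ℂ H] [CompleteSpace H]

theorem stmt8 (A : H →L[ℂ] H) (hA : A.IsPositive) (x y e : H) (he : normA A e = 1) :
    ‖innA A x e * innA A e y‖ ≤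
      (1 / 2) * (‖innA A x y‖ + normA A x * normA A y) := by

  open scoped InnerProductSpace in
  have hA' : (0 : H →L[ℂ] H) ≤ A := (ContinuousLinearMap.nonneg_iff_isPositive A).mpr hA
  set B : H →L[ℂ] H := CFC.sqrt A with hBdef
  have hBB : B * B = A := CFC.sqrt_mul_sqrt_self A hA'
  have hBsa : IsSelfAdjoint B :=
    ((ContinuousLinearMap.nonneg_iff_isPositive B).mp (CFC.sqrt_nonneg A)).isSelfAdjoint
  have hBsymm := (ContinuousLinearMap.isSelfAdjoint_iff_isSymmetric).mp hBsa
  have hinn : ∀ a b : H, innA A a b = ⟪B a, B b⟫_ℂ := by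
    intro a b
    have : A a = B (B a) := by rw [← hBB]; rfl
    rw [innA, this]; exact hBsymm (B a) b
  have hnormA : ∀ a : H, normA A a = ‖B a‖ := by
    intro a
    rw [normA, hinn, norm_eq_sqrt_re_inner (𝕜 := ℂ)]; rfl
  have hBe : ‖B e‖ = 1 := by rw [← hnormA]; exact he
  rw [hinn, hinn, hinn, hnormA, hnormA]
  exact buzano (B x) (B y) (B e) hBe
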